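/- Let T be a finite nonempty index set and, for each t ∈ T, let K_t ⊆ ℝ^n be a convex set. Then a point x ∈ ℝ^n lies in the convex hull of ⋃_{t∈T} K_t if and only if there exist λ_t ≥ 0 for t ∈ T with ∑_{t∈T} λ_t = 1 and points x^t ∈ ℝ^n with x = ∑_{t∈T} x^t such that for each t ∈ T: if λ_t = 0 then x^t = 0, and if λ_t > 0 then x^t / λ_t ∈ K_t (i.e., the pair (λ_t, x^t) satisfies the perspective constraint of K_t). -/

import Mathlib

theorem stmt13 {ι : Type*} [Fintype ι] [Nonempty ι] (n : ℕ)
    (K : ι → Set (Fin n → ℝ)) (hK : ∀ t, Convex ℝ (K t)) (x : Fin n → ℝ) :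
    x ∈ convexHull ℝ (⋃ t, K t) ↔
      ∃ (lam : ι → ℝ) (xt : ι → Fin n → ℝ),
        (∀ t, 0 ≤ lam t) ∧ (∑ t, lam t = 1) ∧ (x = ∑ t, xt t) ∧
        (∀ t, (lam t = 0 → xt t = 0) ∧ (0 < lam t → (lam t)⁻¹ • xt t ∈ K t)) := by
  classical
  constructor
  · -- forward: hull ⊆ S
    set S : Set (Fin n → ℝ) := {y | ∃ (lam : ι → ℝ) (xt : ι → Fin n → ℝ),
          (∀ t, 0 ≤ lam t) ∧ (∑ t, lam t = 1) ∧ (y = ∑ t, xt t) ∧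
          (∀ t, (lam t = 0 → xt t = 0) ∧ (0 < lam t → (lam t)⁻¹ • xt t ∈ K t))} with hSdef
    have hsub : (⋃ t, K t) ⊆ S := by
      rintro y hy
      rcases Set.mem_iUnion.1 hy with ⟨t0, ht0⟩
      refine ⟨fun t => if t = t0 then 1 else 0, fun t => if t = t0 then y else 0, ?_, ?_, ?_, ?_⟩
      · intro t; by_cases h : t = t0 <;> simp [h]
      · simp
      · simp
      · intro t
        by_cases h : t = t0
        · subst h
          exact ⟨fun h1 => by norm_num at h1, fun _ => by simpa using ht0⟩
        · simp [h]
    have hconv : Convex ℝ S := by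
      rintro p hp q hq a b ha hb hab
      rcases hp with ⟨lam, xt, hl0, hls, hpx, hlp⟩
      rcases hq with ⟨mu, yt, hm0, hms, hqy, hmp⟩
      refine ⟨fun t => a * lam t + b * mu t, fun t => a • xt t + b • yt t, ?_, ?_, ?_, ?_⟩
      · intro t
        show 0 ≤ a * lam t + b * mu t
        have h1 := mul_nonneg ha (hl0 t)
        have h2 := mul_nonneg hb (hm0 t)
        linarith
      · rw [Finset.sum_add_distrib, ← Finset.mul_sum, ← Finset.mul_sum, hls, hms]
        simpa using hab
      · rw [Finset.sum_add_distrib, ← Finset.smul_sum, ← Finset.smul_sum, ← hpx, ← hqy]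
      · intro t
        show (a * lam t + b * mu t = 0 → a • xt t + b • yt t = 0) ∧
          (0 < a * lam t + b * mu t →
            (a * lam t + b * mu t)⁻¹ • (a • xt t + b • yt t) ∈ K t)
        have hal : 0 ≤ a * lam t := mul_nonneg ha (hl0 t)
        have hbm : 0 ≤ b * mu t := mul_nonneg hb (hm0 t)
        have haxt : a * lam t = 0 → a • xt t = 0 := by
          intro h
          rcases mul_eq_zero.1 h with h | h
          · simp [h]
          · simp [(hlp t).1 h]
        have hbyt : b * mu t = 0 → b • yt t = 0 := by
          intro h
          rcases mul_eq_zero.1 h with h | h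
          · simp [h]
          · simp [(hmp t).1 h]
        constructor
        · intro h
          have h1 : a * lam t = 0 := by linarith
          have h2 : b * mu t = 0 := by linarith
          rw [haxt h1, hbyt h2, add_zero]
        · intro hpos
          rcases eq_or_lt_of_le hal with hal1 | hal1
          · -- a * lam t = 0 : mass all on second point
            have hbm1 : 0 < b * mu t := by linarith
            have hb' : b ≠ 0 := by rintro rfl; simp at hbm1
            have hmt : 0 < mu t := by
              rcases (hm0 t).lt_or_eq with h | h
              · exact h
              · exfalso; rw [← h] at hbm1; simp at hbm1
            have hq' := (hmp t).2 hmt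
            rw [haxt hal1.symm, zero_add, smul_smul]
            have : (a * lam t + b * mu t)⁻¹ * b = (mu t)⁻¹ := by
              rw [← hal1]; field_simp; ring
            rwa [this]
          · rcases eq_or_lt_of_le hbm with hbm1 | hbm1
            · -- b * mu t = 0 : mass all on first point
              have ha' : a ≠ 0 := by rintro rfl; simp at hal1
              have hlt : 0 < lam t := by
                rcases (hl0 t).lt_or_eq with h | h
                · exact h
                · exfalso; rw [← h] at hal1; simp at hal1
              have hp' := (hlp t).2 hlt
              rw [hbyt hbm1.symm, add_zero, smul_smul]
              have : (a * lam t + b * mu t)⁻¹ * a = (lam t)⁻¹ := by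
                rw [← hbm1]; field_simp; ring
              rwa [this]
            · -- both positive: convex combination inside K t
              have ha' : 0 < a := by
                rcases ha.lt_or_eq with h | h
                · exact h
                · exfalso; rw [← h] at hal1; simp at hal1
              have hb' : 0 < b := by
                rcases hb.lt_or_eq with h | h
                · exact h
                · exfalso; rw [← h] at hbm1; simp at hbm1
              have hlt : 0 < lam t := by
                rcases (hl0 t).lt_or_eq with h | h
                · exact h
                · exfalso; rw [← h] at hal1; simp at hal1
              have hmt : 0 < mu t := by
                rcases (hm0 t).lt_or_eq with h | h
                · exact h
                · exfalso; rw [← h] at hbm1; simp at hbm1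
              have hp' := (hlp t).2 hlt
              have hq' := (hmp t).2 hmt
              have hnu : 0 < a * lam t + b * mu t := hpos
              have key := hK t hp' hq'
                (mul_nonneg (inv_nonneg.2 hnu.le) hal)
                (mul_nonneg (inv_nonneg.2 hnu.le) hbm)
                (by field_simp)
              rw [smul_smul, smul_smul] at key
              rw [smul_add, smul_smul, smul_smul]
              have e1 : (a * lam t + b * mu t)⁻¹ * (a * lam t) * (lam t)⁻¹
                  = (a * lam t + b * mu t)⁻¹ * a := by
                rw [mul_assoc, mul_inv_cancel_right₀ hlt.ne']
              have e2 : (a * lam t + b * mu t)⁻¹ * (b * mu t) * (mu t)⁻¹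
                  = (a * lam t + b * mu t)⁻¹ * b := by
                rw [mul_assoc, mul_inv_cancel_right₀ hmt.ne']
              rwa [e1, e2] at key
    intro hx
    exact convexHull_min hsub hconv hx
  · -- backward
    rintro ⟨lam, xt, hl0, hls, hx, hprop⟩
    set s : Finset ι := Finset.univ.filter (fun t => 0 < lam t) with hsdef
    have hzero : ∀ t ∈ Finset.univ \ s, lam t = 0 := by
      intro t ht
      simp only [hsdef, Finset.mem_sdiff, Finset.mem_filter, Finset.mem_univ, true_and,
        not_lt] at ht
      exact le_antisymm ht (hl0 t)
    have hsum : ∑ t ∈ s, lam t = 1 := by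
      rw [← hls]
      apply Finset.sum_subset (Finset.subset_univ s)
      intro t _ ht
      have : t ∈ Finset.univ \ s := by simp [Finset.mem_sdiff, ht]
      exact hzero t this
    have hxeq : x = ∑ t ∈ s, lam t • ((lam t)⁻¹ • xt t) := by
      rw [hx]
      rw [show (∑ t, xt t) = ∑ t ∈ s, xt t by
        symm
        apply Finset.sum_subset (Finset.subset_univ s)
        intro t _ ht
        have : t ∈ Finset.univ \ s := by simp [Finset.mem_sdiff, ht]
        exact (hprop t).1 (hzero t this)]
      apply Finset.sum_congr rfl
      intro t ht
      have hlt : 0 < lam t := (Finset.mem_filter.1 ht).2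
      rw [smul_smul, mul_inv_cancel₀ hlt.ne', one_smul]
    rw [hxeq]
    apply (convex_convexHull ℝ (⋃ t, K t)).sum_mem
    · intro t _; exact hl0 t
    · exact hsum
    · intro t ht
      have hlt : 0 < lam t := (Finset.mem_filter.1 ht).2
      exact subset_convexHull ℝ _ (Set.mem_iUnion.2 ⟨t, (hprop t).2 hlt⟩)
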